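/- Let X be a proper normal variety, D a big ℝ-divisor and E an effective ℝ-divisor with Supp(E) ⊆ Supp(N_σ(D)). Then N_σ(D + E) = N_σ(D) + E, and H^0(X, D) = H^0(X, D + E) = H^0(X, P_σ(D) + E) = H^0(X, P_σ(D)). -/

import Mathlib

/-- An abstract model of the divisor theory of a proper normal algebraic variety
over a field `k`.  `K` is the function field, `Prime` is the set of prime (Weil)
divisors, and `ord Γ f` is the order of vanishing of the rational function `f`
along the prime divisor `Γ`. -/
structure NormalProperVariety (k : Type) [Field k] where
  /-- The function field `K(X)`. -/
  K : Type
  [fieldK : Field K]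
  [algK : Algebra k K]
  /-- The set of prime (Weil) divisors on `X`. -/
  Prime : Type
  /-- `ord Γ f` is the order of vanishing of `f` along `Γ`. -/
  ord : Prime → K → ℤ
  ord_mul : ∀ (Γ : Prime) {f g : K}, f ≠ 0 → g ≠ 0 →
      ord Γ (f * g) = ord Γ f + ord Γ g
  ord_add : ∀ (Γ : Prime) {f g : K}, f ≠ 0 → g ≠ 0 → f + g ≠ 0 →
      min (ord Γ f) (ord Γ g) ≤ ord Γ (f + g)
  ord_const : ∀ (Γ : Prime) (c : k), c ≠ 0 → ord Γ (algebraMap k K c) = 0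
  finite_ord : ∀ {f : K}, f ≠ 0 → {Γ : Prime | ord Γ f ≠ 0}.Finite

attribute [instance] NormalProperVariety.fieldK NormalProperVariety.algK

namespace NormalProperVariety

variable {k : Type} [Field k] (X : NormalProperVariety k)

open Classical

/-- ℝ-divisors on `X`: finite formal `ℝ`-linear combinations of prime divisors. -/
abbrev Div : Type := X.Prime →₀ ℝ

/-- The divisor `div(f)` of a rational function (by convention `0` for `f = 0`). -/
noncomputable def divOf (f : X.K) : X.Div :=
  if hf : f = 0 then 0
  else Finsupp.ofSupportFinite (fun Γ => (X.ord Γ f : ℝ))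
    (Set.Finite.subset (X.finite_ord hf) (by
      intro Γ hΓ
      simp only [Function.mem_support, ne_eq, Int.cast_eq_zero] at hΓ
      exact hΓ))

/-- The set of principal divisors `div(f)`, `f ∈ K(X)*`. -/
def Principal : Set X.Div := {D | ∃ f : X.K, f ≠ 0 ∧ D = X.divOf f}

/-- `ℝ`-linear equivalence: `D - D' = Σ aᵢ div(fᵢ)` with `aᵢ ∈ ℝ`. -/
def REquiv (D D' : X.Div) : Prop := D - D' ∈ Submodule.span ℝ X.Principal

/-- `ℚ`-linear equivalence: `D - D' = Σ aᵢ div(fᵢ)` with `aᵢ ∈ ℚ`. -/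
def QEquiv (D D' : X.Div) : Prop := D - D' ∈ Submodule.span ℚ X.Principal

/-- `ℤ`-linear equivalence: `D - D' = div(f)`. -/
def ZEquiv (D D' : X.Div) : Prop := ∃ f : X.K, f ≠ 0 ∧ D - D' = X.divOf f

/-- `H⁰(X, 𝒪_X(D)) = H⁰(X, 𝒪_X(⌊D⌋))` as a subset of the function field, namely
`{f ∈ K(X)* : div(f) + D ≥ 0} ∪ {0}`.  (Since `ord` takes integer values,
replacing `D` by its round-down `⌊D⌋` does not change this set.) -/
def H0 (D : X.Div) : Set X.K :=
  {f : X.K | f = 0 ∨ ∀ Γ : X.Prime, 0 ≤ (X.ord Γ f : ℝ) + D Γ}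

/-- `h⁰(D) = dim_k H⁰(X, 𝒪_X(⌊D⌋))`. -/
noncomputable def h0 (D : X.Div) : ℕ := Set.finrank k (X.H0 D)

/-- The volume `vol(D) = limsup_{m → ∞} h⁰(mD) / (mⁿ / n!)`, where `n = dim X`. -/
noncomputable def vol (n : ℕ) (D : X.Div) : ℝ :=
  Filter.limsup (fun m : ℝ => (X.h0 (m • D) : ℝ) * (n.factorial : ℝ) / m ^ n)
    Filter.atTop

/-- `D` is big iff `vol(D) > 0` (`n = dim X`). -/
def IsBig (n : ℕ) (D : X.Div) : Prop := 0 < X.vol n D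

/-- Nakayama's `σ_Γ(D) = inf { mult_Γ D' : D' ∼_ℝ D, D' ≥ 0 }`. -/
noncomputable def sigma (D : X.Div) (Γ : X.Prime) : ℝ :=
  sInf {t : ℝ | ∃ D' : X.Div, X.REquiv D' D ∧ 0 ≤ D' ∧ t = D' Γ}

/-- The negative part `N_σ(D) = Σ_Γ σ_Γ(D) · Γ` of the divisorial Zariski
decomposition (by convention `0` in the degenerate case where infinitely many of
the `σ_Γ(D)` are nonzero). -/
noncomputable def Nsigma (D : X.Div) : X.Div :=
  if h : (Function.support fun Γ => X.sigma D Γ).Finite then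
    Finsupp.ofSupportFinite _ h
  else 0

/-- The positive part `P_σ(D) = D - N_σ(D)`. -/
noncomputable def Psigma (D : X.Div) : X.Div := D - X.Nsigma D

/-- A big ℝ-divisor is movable if `N_σ(D) = 0`. -/
def Movable (D : X.Div) : Prop := X.Nsigma D = 0

end NormalProperVariety

namespace NormalProperVariety

variable {k : Type} [Field k] {X : NormalProperVariety k}

lemma divOf_apply {f : X.K} (hf : f ≠ 0) (Γ : X.Prime) :
    X.divOf f Γ = (X.ord Γ f : ℝ) := by
  rw [divOf, dif_neg hf]
  rfl

/-- The set whose infimum defines `σ_Γ(D)`. -/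
def sigmaSet (X : NormalProperVariety k) (D : X.Div) (Γ : X.Prime) : Set ℝ :=
  {t : ℝ | ∃ D' : X.Div, X.REquiv D' D ∧ 0 ≤ D' ∧ t = D' Γ}

lemma sigma_eq (D : X.Div) (Γ : X.Prime) : X.sigma D Γ = sInf (X.sigmaSet D Γ) := rfl

lemma sigmaSet_bddBelow (D : X.Div) (Γ : X.Prime) : BddBelow (X.sigmaSet D Γ) := by
  refine ⟨0, fun t ht => ?_⟩
  obtain ⟨D', _, he, rfl⟩ := ht
  exact Finsupp.le_def.mp he Γ

lemma sigma_nonneg {D : X.Div} (Γ : X.Prime)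
    (hne : (X.sigmaSet D Γ).Nonempty) : 0 ≤ X.sigma D Γ := by
  rw [sigma_eq]
  refine le_csInf hne fun t ht => ?_
  obtain ⟨D', _, he, rfl⟩ := ht
  exact Finsupp.le_def.mp he Γ

lemma sigma_le {D D' : X.Div} (h1 : X.REquiv D' D) (h2 : 0 ≤ D') (Γ : X.Prime) :
    X.sigma D Γ ≤ D' Γ :=
  csInf_le (X.sigmaSet_bddBelow D Γ) ⟨D', h1, h2, rfl⟩

/-- Bigness gives an effective divisor `ℝ`-equivalent to `D`. -/
lemma exists_effective {n : ℕ} {D : X.Div} (hD : X.IsBig n D) :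
    ∃ D₀ : X.Div, X.REquiv D₀ D ∧ 0 ≤ D₀ := by
  by_contra hcon
  push_neg at hcon
  have h0eq : ∀ m : ℝ, 0 < m → X.H0 (m • D) ⊆ {0} := by
    intro m hm f hf
    by_cases hf0 : f = 0
    · exact hf0
    exfalso
    have hford : ∀ Γ : X.Prime, 0 ≤ (X.ord Γ f : ℝ) + (m • D) Γ := hf.resolve_left hf0
    set D₀ : X.Div := m⁻¹ • X.divOf f + D with hD₀
    have heff : 0 ≤ D₀ := by
      rw [Finsupp.le_def]
      intro Γ
      have h1 := hford Γ
      rw [Finsupp.smul_apply, smul_eq_mul] at h1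
      have h2 : 0 ≤ m⁻¹ * ((X.ord Γ f : ℝ) + m * D Γ) :=
        mul_nonneg (inv_nonneg.mpr hm.le) h1
      have hm0 : m ≠ 0 := hm.ne'
      rw [mul_add, ← mul_assoc, inv_mul_cancel₀ hm0, one_mul] at h2
      rw [Finsupp.coe_zero, Pi.zero_apply, hD₀, Finsupp.add_apply, Finsupp.smul_apply,
        smul_eq_mul, divOf_apply hf0]
      exact h2
    have hreq : X.REquiv D₀ D := by
      have : D₀ - D = m⁻¹ • X.divOf f := by rw [hD₀]; abel
      rw [REquiv, this]
      exact Submodule.smul_mem _ _ (Submodule.subset_span ⟨f, hf0, rfl⟩)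
    exact hcon D₀ hreq heff
  have hev : ∀ᶠ m : ℝ in Filter.atTop,
      (X.h0 (m • D) : ℝ) * (n.factorial : ℝ) / m ^ n = 0 := by
    filter_upwards [Filter.eventually_gt_atTop (0 : ℝ)] with m hm
    have hsub := h0eq m hm
    have : X.h0 (m • D) = 0 := by
      rw [h0, Set.finrank]
      have : Submodule.span k (X.H0 (m • D)) = ⊥ :=
        Submodule.span_eq_bot.mpr fun x hx => hsub hx
      rw [this]
      exact finrank_bot k X.K
    rw [this]
    simp
  have hv : X.vol n D = 0 := by
    rw [vol, Filter.limsup_congr hev]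
    exact Filter.limsup_const 0
  rw [IsBig, hv] at hD
  exact lt_irrefl 0 hD

/-- Key lemma: every effective divisor `ℝ`-equivalent to `D + E` dominates `E`,
provided `σ_Γ(D) > 0` for all `Γ` in the support of `E`. -/
lemma le_of_requiv {D E : X.Div} (D₀ : X.Div) (h₀ : X.REquiv D₀ D) (h₀e : 0 ≤ D₀)
    (hsig : ∀ Γ ∈ E.support, 0 < X.sigma D Γ)
    {D' : X.Div} (h1 : X.REquiv D' (D + E)) (h2 : 0 ≤ D') : E ≤ D' := by
  classical
  rw [Finsupp.le_def]
  by_contra hcon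
  push_neg at hcon
  obtain ⟨Γ₁, hΓ₁⟩ := hcon
  have hD'nn : ∀ Γ, 0 ≤ D' Γ := fun Γ => by simpa using Finsupp.le_def.mp h2 Γ
  have hD₀nn : ∀ Γ, 0 ≤ D₀ Γ := fun Γ => by simpa using Finsupp.le_def.mp h₀e Γ
  set bad : Finset X.Prime := E.support.filter (fun Γ' => D' Γ' < E Γ') with hbad
  have hΓ₁bad : Γ₁ ∈ bad := by
    rw [hbad, Finset.mem_filter, Finsupp.mem_support_iff]
    exact ⟨by intro h; rw [h] at hΓ₁; linarith [hD'nn Γ₁], hΓ₁⟩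
  set r : X.Prime → ℝ := fun Γ' => D₀ Γ' / (D₀ Γ' + (E Γ' - D' Γ')) with hr
  obtain ⟨Γ₀, hΓ₀bad, hmin⟩ := bad.exists_min_image r ⟨Γ₁, hΓ₁bad⟩
  have hbadpos : ∀ Γ' ∈ bad, 0 < D₀ Γ' + (E Γ' - D' Γ') := by
    intro Γ' h
    rw [hbad, Finset.mem_filter] at h
    linarith [hD₀nn Γ', hD'nn Γ', h.2]
  set s : ℝ := r Γ₀ with hs
  have hΓ₀pos := hbadpos Γ₀ hΓ₀bad
  have hD₀Γ₀ : 0 ≤ D₀ Γ₀ := hD₀nn Γ₀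
  have hs0 : 0 ≤ s := div_nonneg hD₀Γ₀ hΓ₀pos.le
  have hs1 : s ≤ 1 := by
    rw [hs, hr, div_le_one hΓ₀pos]
    have h1' : Γ₀ ∈ bad := hΓ₀bad
    rw [hbad, Finset.mem_filter] at h1'
    linarith [h1'.2]
  set B : X.Div := s • D' + (1 - s) • (D₀ + E) - E with hB
  have hBapp : ∀ Γ'', B Γ'' = s * D' Γ'' + (1 - s) * (D₀ Γ'' + E Γ'') - E Γ'' := by
    intro Γ''
    rw [hB]
    simp [Finsupp.add_apply, Finsupp.sub_apply, Finsupp.smul_apply, smul_eq_mul, mul_add]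
  have hkey : ∀ Γ' ∈ bad, s * (D₀ Γ' + (E Γ' - D' Γ')) ≤ D₀ Γ' := by
    intro Γ' h
    have h1' := hmin Γ' h
    have h2' := hbadpos Γ' h
    rw [hs, hr] at h1'
    calc s * (D₀ Γ' + (E Γ' - D' Γ'))
        ≤ (D₀ Γ' / (D₀ Γ' + (E Γ' - D' Γ'))) * (D₀ Γ' + (E Γ' - D' Γ')) := by
          apply mul_le_mul_of_nonneg_right h1' h2'.le
      _ = D₀ Γ' := div_mul_cancel₀ _ h2'.ne'
  have hBeff : 0 ≤ B := by
    rw [Finsupp.le_def]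
    intro Γ''
    rw [Finsupp.coe_zero, Pi.zero_apply, hBapp]
    by_cases hc : D' Γ'' < E Γ''
    · have hmem : Γ'' ∈ bad := by
        rw [hbad, Finset.mem_filter, Finsupp.mem_support_iff]
        exact ⟨by intro h; rw [h] at hc; linarith [hD'nn Γ''], hc⟩
      have := hkey Γ'' hmem
      nlinarith
    · push_neg at hc
      nlinarith [hD₀nn Γ'']
  have hBΓ₀ : B Γ₀ = 0 := by
    rw [hBapp, hs, hr]
    field_simp
    ring
  have hBreq : X.REquiv B D := by
    have heq : B - D = s • (D' - (D + E)) + (1 - s) • (D₀ - D) := by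
      ext Γ''
      rw [hB]
      simp [Finsupp.add_apply, Finsupp.sub_apply, Finsupp.smul_apply, smul_eq_mul]
      ring
    rw [REquiv, heq]
    exact Submodule.add_mem _ (Submodule.smul_mem _ _ h1) (Submodule.smul_mem _ _ h₀)
  have hle : X.sigma D Γ₀ ≤ 0 := hBΓ₀ ▸ X.sigma_le hBreq hBeff Γ₀
  have hΓ₀supp : Γ₀ ∈ E.support := by
    have := hΓ₀bad; rw [hbad, Finset.mem_filter] at this; exact this.1
  exact absurd hle (not_le.mpr (hsig Γ₀ hΓ₀supp))

lemma requiv_add_right {D D' E : X.Div} (h : X.REquiv D' D) : X.REquiv (D' + E) (D + E) := by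
  have heq : D' + E - (D + E) = D' - D := by abel
  rw [REquiv, heq]; exact h

lemma requiv_sub_of_requiv_add {D D' E : X.Div} (h : X.REquiv D' (D + E)) :
    X.REquiv (D' - E) D := by
  have heq : D' - E - D = D' - (D + E) := by abel
  rw [REquiv, heq]; exact h

/-- Additivity of `σ`: `σ_Γ(D + E) = σ_Γ(D) + E Γ` when `E` is effective with support
in the locus where `σ(D) > 0`. -/
lemma sigma_add {D E : X.Div} (D₀ : X.Div) (h₀ : X.REquiv D₀ D) (h₀e : 0 ≤ D₀)
    (hE : 0 ≤ E) (hsig : ∀ Γ ∈ E.support, 0 < X.sigma D Γ) (Γ : X.Prime) :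
    X.sigma (D + E) Γ = X.sigma D Γ + E Γ := by
  have hne : (X.sigmaSet D Γ).Nonempty := ⟨D₀ Γ, D₀, h₀, h₀e, rfl⟩
  have hneE : (X.sigmaSet (D + E) Γ).Nonempty :=
    ⟨(D₀ + E) Γ, D₀ + E, X.requiv_add_right h₀, add_nonneg h₀e hE, rfl⟩
  apply le_antisymm
  · have hle : X.sigma (D + E) Γ - E Γ ≤ sInf (X.sigmaSet D Γ) := by
      refine le_csInf hne fun t ht => ?_
      obtain ⟨D'', hr, he, rfl⟩ := ht
      have hmem : X.sigma (D + E) Γ ≤ (D'' + E) Γ :=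
        X.sigma_le (X.requiv_add_right hr) (add_nonneg he hE) Γ
      rw [Finsupp.add_apply] at hmem
      linarith
    rw [sigma_eq D Γ]
    linarith
  · rw [sigma_eq (D := D + E)]
    refine le_csInf hneE fun t ht => ?_
    obtain ⟨D', hr, he, rfl⟩ := ht
    have hEle : E ≤ D' := X.le_of_requiv D₀ h₀ h₀e hsig hr he
    have heff : 0 ≤ D' - E := by
      rw [Finsupp.le_def]; intro Γ'
      have := Finsupp.le_def.mp hEle Γ'
      simp only [Finsupp.coe_zero, Pi.zero_apply, Finsupp.sub_apply]
      linarith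
    have := X.sigma_le (X.requiv_sub_of_requiv_add hr) heff Γ
    rw [Finsupp.sub_apply] at this
    linarith

lemma sigma_support_finite {D : X.Div} (D₀ : X.Div) (h₀ : X.REquiv D₀ D) (h₀e : 0 ≤ D₀) :
    (Function.support fun Γ => X.sigma D Γ).Finite := by
  refine Set.Finite.subset D₀.support.finite_toSet fun Γ hΓ => ?_
  have hne : (X.sigmaSet D Γ).Nonempty := ⟨D₀ Γ, D₀, h₀, h₀e, rfl⟩
  have h1 : 0 ≤ X.sigma D Γ := X.sigma_nonneg Γ hne
  have h2 : X.sigma D Γ ≤ D₀ Γ := X.sigma_le h₀ h₀e Γ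
  simp only [Function.mem_support, ne_eq] at hΓ
  simp only [Finset.coe_sort_coe, Finset.mem_coe, Finsupp.mem_support_iff]
  intro h0
  rw [h0] at h2
  exact hΓ (le_antisymm h2 h1)

lemma nsigma_apply {D : X.Div} (hfin : (Function.support fun Γ => X.sigma D Γ).Finite)
    (Γ : X.Prime) : X.Nsigma D Γ = X.sigma D Γ := by
  rw [Nsigma, dif_pos hfin]
  rfl

lemma h0_mono {D₁ D₂ : X.Div} (h : D₁ ≤ D₂) : X.H0 D₁ ⊆ X.H0 D₂ := by
  intro f hf
  rcases hf with hf | hf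
  · exact Or.inl hf
  · exact Or.inr fun Γ => le_trans (hf Γ) (by linarith [Finsupp.le_def.mp h Γ])

lemma sigma_le_of_mem_h0 {D E : X.Div} {f : X.K} (hf0 : f ≠ 0) (hf : f ∈ X.H0 (D + E))
    (Γ : X.Prime) : X.sigma (D + E) Γ ≤ (X.ord Γ f : ℝ) + D Γ + E Γ := by
  have hford : ∀ Γ' : X.Prime, 0 ≤ (X.ord Γ' f : ℝ) + (D + E) Γ' := hf.resolve_left hf0
  set D' : X.Div := X.divOf f + (D + E) with hD'
  have heff : 0 ≤ D' := by
    rw [Finsupp.le_def]; intro Γ'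
    have := hford Γ'
    simp only [Finsupp.coe_zero, Pi.zero_apply, hD', Finsupp.add_apply, divOf_apply hf0]
    rw [Finsupp.add_apply] at this
    linarith
  have hreq : X.REquiv D' (D + E) := by
    have heq : D' - (D + E) = X.divOf f := by rw [hD']; abel
    rw [REquiv, heq]
    exact Submodule.subset_span ⟨f, hf0, rfl⟩
  have := X.sigma_le hreq heff Γ
  rw [hD', Finsupp.add_apply, Finsupp.add_apply, divOf_apply hf0] at this
  linarith

end NormalProperVariety

/-- Let `X` be a proper normal variety, `D` a big ℝ-divisor and `E`
an effective ℝ-divisor with `Supp(E) ⊆ Supp(N_σ(D))`.  Then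
`N_σ(D + E) = N_σ(D) + E` and
`H⁰(X, D) = H⁰(X, D + E) = H⁰(X, P_σ(D) + E) = H⁰(X, P_σ(D))`. -/
theorem nsigma_add_support {k : Type} [Field k] (X : NormalProperVariety k) (n : ℕ)
    (D E : X.Div) (hD : X.IsBig n D) (hE : 0 ≤ E)
    (hsupp : E.support ⊆ (X.Nsigma D).support) :
    X.Nsigma (D + E) = X.Nsigma D + E ∧
      X.H0 D = X.H0 (D + E) ∧
      X.H0 (D + E) = X.H0 (X.Psigma D + E) ∧
      X.H0 (X.Psigma D + E) = X.H0 (X.Psigma D) := by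
  obtain ⟨D₀, h₀, h₀e⟩ := NormalProperVariety.exists_effective hD
  have hfinD := X.sigma_support_finite D₀ h₀ h₀e
  have hND : ∀ Γ, X.Nsigma D Γ = X.sigma D Γ := X.nsigma_apply hfinD
  have hEnn : ∀ Γ, 0 ≤ E Γ := fun Γ => by simpa using Finsupp.le_def.mp hE Γ
  have hsignn : ∀ Γ, 0 ≤ X.sigma D Γ := fun Γ =>
    X.sigma_nonneg Γ ⟨D₀ Γ, D₀, h₀, h₀e, rfl⟩
  have hsig : ∀ Γ ∈ E.support, 0 < X.sigma D Γ := by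
    intro Γ hΓ
    have h1 : X.Nsigma D Γ ≠ 0 := Finsupp.mem_support_iff.mp (hsupp hΓ)
    rw [hND] at h1
    exact (hsignn Γ).lt_of_ne (Ne.symm h1)
  have hadd : ∀ Γ, X.sigma (D + E) Γ = X.sigma D Γ + E Γ :=
    X.sigma_add D₀ h₀ h₀e hE hsig
  have hfinDE : (Function.support fun Γ => X.sigma (D + E) Γ).Finite := by
    refine Set.Finite.subset (hfinD.union E.support.finite_toSet) fun Γ hΓ => ?_
    simp only [Function.mem_support, ne_eq] at hΓ
    rw [hadd] at hΓ
    by_contra hc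
    simp only [Set.mem_union, Function.mem_support, ne_eq, Finset.coe_sort_coe,
      Finset.mem_coe, Finsupp.mem_support_iff, not_or, not_not] at hc
    rw [hc.1, hc.2, add_zero] at hΓ
    exact hΓ rfl
  have hNDE : ∀ Γ, X.Nsigma (D + E) Γ = X.sigma D Γ + E Γ := fun Γ => by
    rw [X.nsigma_apply hfinDE, hadd]
  have hP : ∀ Γ, X.Psigma D Γ = D Γ - X.sigma D Γ := fun Γ => by
    rw [NormalProperVariety.Psigma, Finsupp.sub_apply, hND]
  -- key estimate
  have key : ∀ f : X.K, f ≠ 0 → f ∈ X.H0 (D + E) →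
      ∀ Γ, X.sigma D Γ ≤ (X.ord Γ f : ℝ) + D Γ := by
    intro f hf0 hf Γ
    have h1 := X.sigma_le_of_mem_h0 hf0 hf Γ
    rw [hadd] at h1
    linarith
  refine ⟨?_, ?_, ?_, ?_⟩
  · ext Γ
    rw [hNDE, Finsupp.add_apply, hND]
  · -- H0 D = H0 (D + E)
    apply Set.Subset.antisymm
    · apply X.h0_mono
      rw [Finsupp.le_def]
      intro Γ
      rw [Finsupp.add_apply]
      linarith [hEnn Γ]
    · intro f hf
      by_cases hf0 : f = 0
      · exact Or.inl hf0
      · exact Or.inr fun Γ => le_trans (hsignn Γ) (key f hf0 hf Γ)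
  · -- H0 (D + E) = H0 (P + E)
    apply Set.Subset.antisymm
    · intro f hf
      by_cases hf0 : f = 0
      · exact Or.inl hf0
      · refine Or.inr fun Γ => ?_
        rw [Finsupp.add_apply, hP]
        linarith [key f hf0 hf Γ, hEnn Γ]
    · apply X.h0_mono
      rw [Finsupp.le_def]
      intro Γ
      rw [Finsupp.add_apply, Finsupp.add_apply, hP]
      linarith [hsignn Γ]
  · -- H0 (P + E) = H0 P
    apply Set.Subset.antisymm
    · intro f hf
      have hf' : f ∈ X.H0 (D + E) := by
        revert hf
        apply X.h0_mono
        rw [Finsupp.le_def]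
        intro Γ
        rw [Finsupp.add_apply, Finsupp.add_apply, hP]
        linarith [hsignn Γ]
      by_cases hf0 : f = 0
      · exact Or.inl hf0
      · refine Or.inr fun Γ => ?_
        rw [hP]
        linarith [key f hf0 hf' Γ]
    · apply X.h0_mono
      rw [Finsupp.le_def]
      intro Γ
      rw [Finsupp.add_apply]
      linarith [hEnn Γ]
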